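/- Let m and n be positive integers and let R = {v ∈ V(HD(m,n)) : deg(v) = 4} be the set of degree-4 vertices of the Hopi rectangle graph HD(m,n). Then for every nonempty subset R' ⊆ R, there exist at least four pairwise distinct vertices x_1, x_2, x_3, x_4 ∈ V(HD(m,n)) \ R' such that each x_i has exactly one neighbor in R', i.e., |N_{HD(m,n)}(x_i) ∩ R'| = 1 for i = 1, 2, 3, 4. -/

import Mathlib

/-- The vertex set of the Hopi rectangle graph of order `(m,n)`: the set of
integer lattice points `(i,j)` with `m-1 ≤ i+j ≤ 2n+m-1` and `|i-j| ≤ m`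
(realized as a `Finset` by filtering a sufficiently large box). -/
noncomputable def HDverts (m n : ℕ) : Finset (ℤ × ℤ) :=
  (Finset.Icc (-2 : ℤ) (2*n + 2*m) ×ˢ Finset.Icc (-2 : ℤ) (2*n + 2*m)).filter
    (fun p => (m : ℤ) - 1 ≤ p.1 + p.2 ∧ p.1 + p.2 ≤ 2*n + m - 1 ∧ |p.1 - p.2| ≤ m)

/-- The Hopi rectangle graph `HD(m,n)`: vertices are the points of `HDverts m n`,
and `(i,j)` is adjacent to `(i',j')` iff `|i - i'| + |j - j'| = 1`. -/
def HD (m n : ℕ) : SimpleGraph {p : ℤ × ℤ // p ∈ HDverts m n} where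
  Adj u v := |u.val.1 - v.val.1| + |u.val.2 - v.val.2| = 1
  symm := by
    refine ⟨?_⟩
    intro u v h
    rw [abs_sub_comm v.val.1 u.val.1, abs_sub_comm v.val.2 u.val.2]
    exact h
  loopless := by refine ⟨?_⟩; intro u h; simp at h

lemma HD_adj (m n : ℕ) (u v : {p : ℤ × ℤ // p ∈ HDverts m n}) :
    (HD m n).Adj u v ↔ |u.val.1 - v.val.1| + |u.val.2 - v.val.2| = 1 := Iff.rfl

/-- A degree-4 vertex has all four lattice neighbors present in the graph. -/
lemma HD_deg4_step (m n : ℕ) (v : {p : ℤ × ℤ // p ∈ HDverts m n})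
    (hv : ((HD m n).neighborSet v).ncard = 4) (d : ℤ × ℤ)
    (hd : |d.1| + |d.2| = 1) :
    ∃ x : {p : ℤ × ℤ // p ∈ HDverts m n},
      x.val = (v.val.1 + d.1, v.val.2 + d.2) := by
  set T4 : Set (ℤ × ℤ) :=
    insert (v.val.1 + 1, v.val.2) (insert (v.val.1 - 1, v.val.2)
      (insert (v.val.1, v.val.2 + 1) {(v.val.1, v.val.2 - 1)})) with hT4
  have himg : Subtype.val '' (HD m n).neighborSet v ⊆ T4 := by
    rintro q ⟨u, hu, rfl⟩
    have hadj : |v.val.1 - u.val.1| + |v.val.2 - u.val.2| = 1 :=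
      (HD_adj m n v u).mp hu
    simp only [hT4, Set.mem_insert_iff, Set.mem_singleton_iff, Prod.ext_iff]
    rcases abs_cases (v.val.1 - u.val.1) with ⟨h1, _⟩ | ⟨h1, _⟩ <;>
      rcases abs_cases (v.val.2 - u.val.2) with ⟨h2, _⟩ | ⟨h2, _⟩ <;> omega
  have hcard : (Subtype.val '' (HD m n).neighborSet v).ncard = 4 := by
    rw [Set.ncard_image_of_injective _ Subtype.val_injective]; exact hv
  have hT4fin : T4.Finite := by
    apply Set.Finite.insert; apply Set.Finite.insert; apply Set.Finite.insert
    exact Set.finite_singleton _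
  have hT4card : T4.ncard ≤ 4 := by
    have h1 := Set.ncard_insert_le (v.val.1 + 1, v.val.2)
      (insert (v.val.1 - 1, v.val.2)
        (insert (v.val.1, v.val.2 + 1) {(v.val.1, v.val.2 - 1)}))
    have h2 := Set.ncard_insert_le (v.val.1 - 1, v.val.2)
      (insert (v.val.1, v.val.2 + 1) ({(v.val.1, v.val.2 - 1)} : Set (ℤ × ℤ)))
    have h3 := Set.ncard_insert_le (v.val.1, v.val.2 + 1)
      ({(v.val.1, v.val.2 - 1)} : Set (ℤ × ℤ))
    have h4 := Set.ncard_singleton ((v.val.1, v.val.2 - 1) : ℤ × ℤ)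
    rw [hT4]; omega
  have heq : Subtype.val '' (HD m n).neighborSet v = T4 :=
    Set.eq_of_subset_of_ncard_le himg (by omega) hT4fin
  have hmem : (v.val.1 + d.1, v.val.2 + d.2) ∈ T4 := by
    simp only [hT4, Set.mem_insert_iff, Set.mem_singleton_iff, Prod.ext_iff]
    rcases abs_cases d.1 with ⟨h1, _⟩ | ⟨h1, _⟩ <;>
      rcases abs_cases d.2 with ⟨h2, _⟩ | ⟨h2, _⟩ <;> omega
  rw [← heq] at hmem
  obtain ⟨u, _, hu⟩ := hmem
  exact ⟨u, hu⟩

/-- The key construction: maximizing a suitable linear functional over `R'`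
and stepping in direction `d` produces a vertex outside `R'` with exactly one
neighbor in `R'`. -/
lemma HD_key (m n : ℕ) (R' : Set {p : ℤ × ℤ // p ∈ HDverts m n})
    (hsub : R' ⊆ {v | ((HD m n).neighborSet v).ncard = 4}) (hne : R'.Nonempty)
    (d : ℤ × ℤ) (hd : |d.1| + |d.2| = 1) (a b : ℤ)
    (hW : ∀ c : ℤ × ℤ, |c.1| + |c.2| = 1 → ¬(d.1 + c.1 = 0 ∧ d.2 + c.2 = 0) →
      0 < a * (d.1 + c.1) + b * (d.2 + c.2)) :
    ∃ x : {p : ℤ × ℤ // p ∈ HDverts m n}, ∃ v ∈ R',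
      x.val = (v.val.1 + d.1, v.val.2 + d.2) ∧
      (∀ u ∈ R', a * u.val.1 + b * u.val.2 ≤ a * v.val.1 + b * v.val.2) ∧
      x ∉ R' ∧ ((HD m n).neighborSet x ∩ R').ncard = 1 := by
  obtain ⟨v, hvR, hmax⟩ :=
    Set.exists_max_image R' (fun u => a * u.val.1 + b * u.val.2)
      (Set.toFinite R') hne
  obtain ⟨x, hx⟩ := HD_deg4_step m n v (hsub hvR) d hd
  have hx1 : x.val.1 = v.val.1 + d.1 := by rw [hx]
  have hx2 : x.val.2 = v.val.2 + d.2 := by rw [hx]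
  have hwd : 0 < a * d.1 + b * d.2 := by
    have hne' : ¬(d.1 + d.1 = 0 ∧ d.2 + d.2 = 0) := by
      rcases abs_cases d.1 with ⟨h1, _⟩ | ⟨h1, _⟩ <;>
        rcases abs_cases d.2 with ⟨h2, _⟩ | ⟨h2, _⟩ <;> omega
    have h := hW d hd hne'
    have h2 : a * (d.1 + d.1) + b * (d.2 + d.2) = 2 * (a * d.1 + b * d.2) := by
      ring
    linarith
  -- x is not in R'
  have hxR : x ∉ R' := by
    intro hxR
    have h := hmax x hxR
    have h2 : a * x.val.1 + b * x.val.2 =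
        (a * v.val.1 + b * v.val.2) + (a * d.1 + b * d.2) := by
      rw [hx1, hx2]; ring
    linarith
  -- any R'-neighbor of x equals v
  have main : ∀ u ∈ R', ∀ c1 c2 : ℤ, |c1| + |c2| = 1 →
      u.val.1 = x.val.1 + c1 → u.val.2 = x.val.2 + c2 → u = v := by
    intro u huR c1 c2 hc hu1 hu2
    by_cases h0 : d.1 + c1 = 0 ∧ d.2 + c2 = 0
    · exact Subtype.ext (Prod.ext_iff.mpr ⟨by omega, by omega⟩)
    · exfalso
      have hw := hW (c1, c2) hc h0
      have h := hmax u huR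
      simp only at h hw
      have h2 : a * u.val.1 + b * u.val.2 =
          (a * v.val.1 + b * v.val.2) + (a * (d.1 + c1) + b * (d.2 + c2)) := by
        rw [hu1, hu2, hx1, hx2]; ring
      linarith
  have hset : (HD m n).neighborSet x ∩ R' = {v} := by
    ext u
    simp only [Set.mem_inter_iff, SimpleGraph.mem_neighborSet,
      Set.mem_singleton_iff]
    constructor
    · rintro ⟨hadj, huR⟩
      have hadj' : |x.val.1 - u.val.1| + |x.val.2 - u.val.2| = 1 :=
        (HD_adj m n x u).mp hadj
      have hcases : (u.val.1 = x.val.1 + 1 ∧ u.val.2 = x.val.2) ∨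
          (u.val.1 = x.val.1 - 1 ∧ u.val.2 = x.val.2) ∨
          (u.val.1 = x.val.1 ∧ u.val.2 = x.val.2 + 1) ∨
          (u.val.1 = x.val.1 ∧ u.val.2 = x.val.2 - 1) := by
        rcases abs_cases (x.val.1 - u.val.1) with ⟨h1, _⟩ | ⟨h1, _⟩ <;>
          rcases abs_cases (x.val.2 - u.val.2) with ⟨h2, _⟩ | ⟨h2, _⟩ <;> omega
      rcases hcases with ⟨h1, h2⟩ | ⟨h1, h2⟩ | ⟨h1, h2⟩ | ⟨h1, h2⟩
      · exact main u huR 1 0 (by norm_num) h1 (by omega)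
      · exact main u huR (-1) 0 (by norm_num) h1 (by omega)
      · exact main u huR 0 1 (by norm_num) (by omega) h2
      · exact main u huR 0 (-1) (by norm_num) (by omega) h2
    · rintro rfl
      refine ⟨?_, hvR⟩
      rw [HD_adj]
      have e1 : x.val.1 - u.val.1 = d.1 := by omega
      have e2 : x.val.2 - u.val.2 = d.2 := by omega
      rw [e1, e2]; exact hd
  refine ⟨x, v, hvR, hx, fun u hu => hmax u hu, hxR, ?_⟩
  rw [hset, Set.ncard_singleton]

/-- For any nonempty subset `R'` of the degree-4 vertices of `HD(m,n)`, there
are at least four distinct vertices outside of `R'`, each having exactly one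
neighbor in `R'`. -/
theorem HD_degree_four_boundary (m n : ℕ) (hm : 0 < m) (hn : 0 < n)
    (R' : Set {p : ℤ × ℤ // p ∈ HDverts m n})
    (hsub : R' ⊆ {v | ((HD m n).neighborSet v).ncard = 4})
    (hne : R'.Nonempty) :
    ∃ x₁ x₂ x₃ x₄ : {p : ℤ × ℤ // p ∈ HDverts m n},
      x₁ ≠ x₂ ∧ x₁ ≠ x₃ ∧ x₁ ≠ x₄ ∧ x₂ ≠ x₃ ∧ x₂ ≠ x₄ ∧ x₃ ≠ x₄ ∧
      x₁ ∉ R' ∧ x₂ ∉ R' ∧ x₃ ∉ R' ∧ x₄ ∉ R' ∧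
      ((HD m n).neighborSet x₁ ∩ R').ncard = 1 ∧
      ((HD m n).neighborSet x₂ ∩ R').ncard = 1 ∧
      ((HD m n).neighborSet x₃ ∩ R').ncard = 1 ∧
      ((HD m n).neighborSet x₄ ∩ R').ncard = 1 := by
  obtain ⟨x₁, v₁, hv₁R, hx₁v, hmax₁, hx₁R, hc₁⟩ :=
    HD_key m n R' hsub hne (1, 0) (by norm_num) 2 1 (by
      rintro ⟨c1, c2⟩ hc h0
      simp only at hc h0 ⊢
      rcases abs_cases c1 with ⟨h1, _⟩ | ⟨h1, _⟩ <;>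
        rcases abs_cases c2 with ⟨h2, _⟩ | ⟨h2, _⟩ <;> omega)
  obtain ⟨x₂, v₂, hv₂R, hx₂v, hmax₂, hx₂R, hc₂⟩ :=
    HD_key m n R' hsub hne (0, 1) (by norm_num) 1 2 (by
      rintro ⟨c1, c2⟩ hc h0
      simp only at hc h0 ⊢
      rcases abs_cases c1 with ⟨h1, _⟩ | ⟨h1, _⟩ <;>
        rcases abs_cases c2 with ⟨h2, _⟩ | ⟨h2, _⟩ <;> omega)
  obtain ⟨x₃, v₃, hv₃R, hx₃v, hmax₃, hx₃R, hc₃⟩ :=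
    HD_key m n R' hsub hne (-1, 0) (by norm_num) (-2) (-1) (by
      rintro ⟨c1, c2⟩ hc h0
      simp only at hc h0 ⊢
      rcases abs_cases c1 with ⟨h1, _⟩ | ⟨h1, _⟩ <;>
        rcases abs_cases c2 with ⟨h2, _⟩ | ⟨h2, _⟩ <;> omega)
  obtain ⟨x₄, v₄, hv₄R, hx₄v, hmax₄, hx₄R, hc₄⟩ :=
    HD_key m n R' hsub hne (0, -1) (by norm_num) (-1) (-2) (by
      rintro ⟨c1, c2⟩ hc h0
      simp only at hc h0 ⊢
      rcases abs_cases c1 with ⟨h1, _⟩ | ⟨h1, _⟩ <;>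
        rcases abs_cases c2 with ⟨h2, _⟩ | ⟨h2, _⟩ <;> omega)
  have e11 : x₁.val.1 = v₁.val.1 + 1 := by rw [hx₁v]
  have e12 : x₁.val.2 = v₁.val.2 := by rw [hx₁v]; ring
  have e21 : x₂.val.1 = v₂.val.1 := by rw [hx₂v]; ring
  have e22 : x₂.val.2 = v₂.val.2 + 1 := by rw [hx₂v]
  have e31 : x₃.val.1 = v₃.val.1 - 1 := by rw [hx₃v]; ring
  have e32 : x₃.val.2 = v₃.val.2 := by rw [hx₃v]; ring
  have e41 : x₄.val.1 = v₄.val.1 := by rw [hx₄v]; ring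
  have e42 : x₄.val.2 = v₄.val.2 - 1 := by rw [hx₄v]; ring
  have h12 : x₁ ≠ x₂ := by
    intro h
    have h1 : x₁.val.1 = x₂.val.1 := by rw [h]
    have h2 : x₁.val.2 = x₂.val.2 := by rw [h]
    have := hmax₁ v₂ hv₂R
    omega
  have h13 : x₁ ≠ x₃ := by
    intro h
    have h1 : x₁.val.1 = x₃.val.1 := by rw [h]
    have h2 : x₁.val.2 = x₃.val.2 := by rw [h]
    have := hmax₁ v₃ hv₃R
    omega
  have h14 : x₁ ≠ x₄ := by
    intro h
    have h1 : x₁.val.1 = x₄.val.1 := by rw [h]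
    have h2 : x₁.val.2 = x₄.val.2 := by rw [h]
    have := hmax₁ v₄ hv₄R
    omega
  have h23 : x₂ ≠ x₃ := by
    intro h
    have h1 : x₂.val.1 = x₃.val.1 := by rw [h]
    have h2 : x₂.val.2 = x₃.val.2 := by rw [h]
    have := hmax₂ v₃ hv₃R
    omega
  have h24 : x₂ ≠ x₄ := by
    intro h
    have h1 : x₂.val.1 = x₄.val.1 := by rw [h]
    have h2 : x₂.val.2 = x₄.val.2 := by rw [h]
    have := hmax₂ v₄ hv₄R
    omega
  have h34 : x₃ ≠ x₄ := by
    intro h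
    have h1 : x₃.val.1 = x₄.val.1 := by rw [h]
    have h2 : x₃.val.2 = x₄.val.2 := by rw [h]
    have := hmax₃ v₄ hv₄R
    omega
  exact ⟨x₁, x₂, x₃, x₄, h12, h13, h14, h23, h24, h34,
    hx₁R, hx₂R, hx₃R, hx₄R, hc₁, hc₂, hc₃, hc₄⟩
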